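/- For every N ≥ 2, every KC-PMI P on N parties, and every max-clique Q of the line graph L_{H_P} of the correlation hypergraph: (i) |Q^∩| ∈ {0, 1, 2}; (ii) if |Q^∩| > 0, then for every v_ℓ ∈ Q^∩ the sub-hypergraph H_{⟦N⟧∖{ℓ}} is disconnected; (iii) |Q^∩| = 2 if and only if H_P is disconnected and, writing Q^∩ = {v_{ℓ₁}, v_{ℓ₂}}, one of its connected components has vertex set exactly {v_{ℓ₁}, v_{ℓ₂}} and contains the hyperedge e_{{ℓ₁,ℓ₂}}. -/
import Mathlib


namespace HEC

/-- The parties `⟦N⟧ = {0,1,…,N}`, where `0` is the purifier. -/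
abbrev Party (N : ℕ) := Fin (N + 1)

/-- A collection of parties. -/
abbrev PSet (N : ℕ) := Finset (Party N)

/-- MI instances: unordered pairs of subsets of parties. -/
abbrev MI (N : ℕ) := Sym2 (PSet N)

/-- `m` is an MI instance, i.e. an unordered pair of disjoint nonempty subsets of `⟦N⟧`. -/
def IsMIInst {N : ℕ} (m : MI N) : Prop :=
  ∃ Y Z : PSet N, m = s(Y, Z) ∧ Y.Nonempty ∧ Z.Nonempty ∧ Disjoint Y Z

/-- The MI-poset order: `{Y,Z} ⪯ {Y',Z'}` iff (`Y ⊆ Y'` and `Z ⊆ Z'`) or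
(`Y ⊆ Z'` and `Z ⊆ Y'`).  (The two cases are absorbed by the existential over
representatives of the unordered pairs.) -/
def MIle {N : ℕ} (m m' : MI N) : Prop :=
  ∃ Y Z Y' Z' : PSet N, m = s(Y, Z) ∧ m' = s(Y', Z') ∧ Y ⊆ Y' ∧ Z ⊆ Z'

/-- An `N`-party entropy vector, extended to all subsets of `⟦N⟧` by the purification
convention: `S ∅ = 0` and `S Y = S (⟦N⟧ \ Y)` whenever `0 ∈ Y`. -/
structure EntropyVec (N : ℕ) where
  S : PSet N → ℝ
  S_empty : S ∅ = 0
  S_purify : ∀ Y : PSet N, (0 : Party N) ∈ Y → S Y = S (Finset.univ \ Y)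

/-- Mutual information `I(Y:Z) = S_Y + S_Z - S_{Y∪Z}`. -/
def EntropyVec.I {N : ℕ} (v : EntropyVec N) (Y Z : PSet N) : ℝ :=
  v.S Y + v.S Z - v.S (Y ∪ Z)

/-- Membership in the subadditivity cone: `I(Y:Z) ≥ 0` for every MI instance. -/
def EntropyVec.InSAC {N : ℕ} (v : EntropyVec N) : Prop :=
  ∀ Y Z : PSet N, Y.Nonempty → Z.Nonempty → Disjoint Y Z → 0 ≤ v.I Y Z

/-- The pattern of marginal independence of `v`: the MI instances vanishing on `v`. -/
def EntropyVec.PMI {N : ℕ} (v : EntropyVec N) : Set (MI N) :=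
  {m | ∃ Y Z : PSet N, m = s(Y, Z) ∧ Y.Nonempty ∧ Z.Nonempty ∧ Disjoint Y Z ∧ v.I Y Z = 0}

/-- `P` is a down-set in the MI-poset. -/
def IsMIDownSet {N : ℕ} (P : Set (MI N)) : Prop :=
  ∀ m m' : MI N, IsMIInst m → m' ∈ P → MIle m m' → m ∈ P

/-- `P` is a KC-PMI: the PMI of some entropy vector in the subadditivity cone,
which moreover is a down-set in the MI-poset. -/
def IsKCPMI {N : ℕ} (P : Set (MI N)) : Prop :=
  (∃ v : EntropyVec N, v.InSAC ∧ P = v.PMI) ∧ IsMIDownSet P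

/-- The β-set of `X`: all MI instances `{Y,Z}` with `Y ∪ Z = X`. -/
def betaSet {N : ℕ} (X : PSet N) : Set (MI N) :=
  {m | ∃ Y Z : PSet N, m = s(Y, Z) ∧ Y.Nonempty ∧ Z.Nonempty ∧ Disjoint Y Z ∧ Y ∪ Z = X}

/-- The antichain `A` of minimal elements of `P̄ = M_N ∖ P`. -/
def minimalMI {N : ℕ} (P : Set (MI N)) : Set (MI N) :=
  {m | IsMIInst m ∧ m ∉ P ∧ ∀ m' : MI N, IsMIInst m' → m' ∉ P → MIle m' m → m' = m}

/-- `β(X)` is positive: `β(X) ⊆ P̄`. -/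
def BPos {N : ℕ} (P : Set (MI N)) (X : PSet N) : Prop :=
  ∀ m ∈ betaSet X, m ∉ P

/-- `β(X)` is vanishing: `β(X) ⊆ P`. -/
def BVan {N : ℕ} (P : Set (MI N)) (X : PSet N) : Prop :=
  betaSet X ⊆ P

/-- `β(X)` is partial: it has elements both in `P` and in `P̄`. -/
def BPart {N : ℕ} (P : Set (MI N)) (X : PSet N) : Prop :=
  (∃ m ∈ betaSet X, m ∈ P) ∧ (∃ m ∈ betaSet X, m ∉ P)

/-- `β(X)` is essential: `β(X) ∩ A ≠ ∅`. -/
def BEss {N : ℕ} (P : Set (MI N)) (X : PSet N) : Prop :=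
  ∃ m ∈ betaSet X, m ∈ minimalMI P

/-- `β(X)` is completely essential: `β(X) ⊆ A`. -/
def BCEss {N : ℕ} (P : Set (MI N)) (X : PSet N) : Prop :=
  betaSet X ⊆ minimalMI P

/-- `β(X)` is non-essential: `β(X) ∩ A = ∅`. -/
def BNEss {N : ℕ} (P : Set (MI N)) (X : PSet N) : Prop :=
  ∀ m ∈ betaSet X, m ∉ minimalMI P

/-- `pos_<(Y)`: the proper subsystems `Z ⊊ Y` with `|Z| ≥ 2` and `β(Z)` positive. -/
def posBelow {N : ℕ} (P : Set (MI N)) (Y : PSet N) : Set (PSet N) :=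
  {Z | Z ⊂ Y ∧ 2 ≤ Z.card ∧ BPos P Z}

/-- `Max(pos_<(Y))`: the inclusion-maximal elements of `pos_<(Y)`. -/
def maxPosBelow {N : ℕ} (P : Set (MI N)) (Y : PSet N) : Set (PSet N) :=
  {Z | Z ∈ posBelow P Y ∧ ∀ Z' ∈ posBelow P Y, Z ⊆ Z' → Z = Z'}

/-- The MI instance `m = {Y,Z}` splits `X` if `X ∩ Y ≠ ∅` and `X ∩ Z ≠ ∅`. -/
def Splits {N : ℕ} (m : MI N) (X : PSet N) : Prop :=
  ∃ Y Z : PSet N, m = s(Y, Z) ∧ (X ∩ Y).Nonempty ∧ (X ∩ Z).Nonempty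

/-- The hyperedges of the correlation hypergraph `H_P`: one hyperedge `e_X` for each
`X ⊆ ⟦N⟧` (with `|X| ≥ 2`) whose β-set is positive.  Vertices `v_ℓ` are identified
with the parties `ℓ ∈ ⟦N⟧`, and hyperedges with the corresponding subsystems. -/
def Hedge {N : ℕ} (P : Set (MI N)) : Set (PSet N) :=
  {X | 2 ≤ X.card ∧ BPos P X}

/-- The hyperedges of the sub-hypergraph `H_Y`: the hyperedges `e_Z` with `Z ⊊ Y`. -/
def subEdges {N : ℕ} (P : Set (MI N)) (Y : PSet N) : Set (PSet N) :=
  {Z | Z ⊂ Y ∧ Z ∈ Hedge P}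

/-- One step in a hypergraph with hyperedge set `E`: `a` and `b` lie in a common
hyperedge. -/
def hStep {N : ℕ} (E : Set (PSet N)) (a b : Party N) : Prop :=
  ∃ e ∈ E, a ∈ e ∧ b ∈ e

/-- Connectivity of the hypergraph with vertex set `V` and hyperedge set `E`:
every two vertices are joined by a path (a one-vertex hypergraph is connected). -/
def hConn {N : ℕ} (V : PSet N) (E : Set (PSet N)) : Prop :=
  ∀ a ∈ V, ∀ b ∈ V, Relation.ReflTransGen (hStep E) a b

/-- The vertex set of the connected component of `a` in the hypergraph with
vertex set `V` and hyperedge set `E`. -/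
def hComp {N : ℕ} (V : PSet N) (E : Set (PSet N)) (a : Party N) : Set (Party N) :=
  {b | b ∈ V ∧ Relation.ReflTransGen (hStep E) a b}

/-- A clique of the line graph `L_{H_P}`: a set of hyperedges of `H_P` which are
pairwise adjacent (distinct hyperedges being adjacent iff they intersect). -/
def IsLineClique {N : ℕ} (P : Set (MI N)) (Q : Set (PSet N)) : Prop :=
  Q ⊆ Hedge P ∧ ∀ e ∈ Q, ∀ f ∈ Q, e ≠ f → (e ∩ f).Nonempty

/-- A max-clique of the line graph `L_{H_P}`: a (nonempty) clique which is maximal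
under inclusion. -/
def IsMaxClique {N : ℕ} (P : Set (MI N)) (Q : Set (PSet N)) : Prop :=
  Q.Nonempty ∧ IsLineClique P Q ∧ ∀ Q' : Set (PSet N), IsLineClique P Q' → Q ⊆ Q' → Q = Q'

/-- `Q^∩`: the intersection of the hyperedges in `Q`, viewed as sets of vertices. -/
def qInter {N : ℕ} (Q : Set (PSet N)) : Set (Party N) :=
  {ℓ | ∀ e ∈ Q, ℓ ∈ e}

variable {N : ℕ} {P : Set (MI N)} {v : EntropyVec N}

lemma I_comm (v : EntropyVec N) (A B : PSet N) : v.I A B = v.I B A := by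
  unfold EntropyVec.I; rw [Finset.union_comm]; ring

lemma S_compl (v : EntropyVec N) (Y : PSet N) : v.S (Finset.univ \ Y) = v.S Y := by
  by_cases h : (0 : Party N) ∈ Y
  · exact (v.S_purify Y h).symm
  · have h0 : (0 : Party N) ∈ Finset.univ \ Y := by simp [h]
    rw [v.S_purify _ h0, Finset.sdiff_sdiff_eq_self (Finset.subset_univ Y)]

lemma S_univ (v : EntropyVec N) : v.S (Finset.univ : PSet N) = 0 := by
  have := v.S_purify Finset.univ (Finset.mem_univ 0)
  simpa [v.S_empty] using this

lemma SA' (hv : v.InSAC) {A B : PSet N} (h : Disjoint A B) :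
    v.S (A ∪ B) ≤ v.S A + v.S B := by
  rcases A.eq_empty_or_nonempty with rfl | hA
  · simp [v.S_empty]
  rcases B.eq_empty_or_nonempty with rfl | hB
  · simp [v.S_empty]
  have := hv A B hA hB h
  unfold EntropyVec.I at this; linarith

lemma AL (hv : v.InSAC) {A B : PSet N} (h : Disjoint A B) :
    v.S B ≤ v.S (A ∪ B) + v.S A := by
  rcases A.eq_empty_or_nonempty with rfl | hA
  · simp [v.S_empty]
  rcases (Finset.univ \ (A ∪ B)).eq_empty_or_nonempty with hWe | hWne
  · have hU : A ∪ B = Finset.univ :=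
      Finset.univ_subset_iff.mp (Finset.sdiff_eq_empty_iff_subset.mp hWe)
    have hBA : B = Finset.univ \ A := by
      ext x
      simp only [Finset.mem_sdiff, Finset.mem_univ, true_and]
      constructor
      · intro hx; exact fun hxA => (Finset.disjoint_left.mp h) hxA hx
      · intro hx
        have : x ∈ A ∪ B := hU ▸ Finset.mem_univ x
        rcases Finset.mem_union.mp this with h' | h'
        · exact absurd h' hx
        · exact h'
    rw [hU, S_univ, hBA, S_compl]; linarith
  · set W : PSet N := Finset.univ \ (A ∪ B) with hW
    have hdW : Disjoint W A :=
      Finset.disjoint_of_subset_right Finset.subset_union_left Finset.sdiff_disjoint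
    have h0 := hv W A hWne hA hdW
    have hSW : v.S W = v.S (A ∪ B) := by
      rw [hW, S_compl]
    have hWA : W ∪ A = Finset.univ \ B := by
      ext x
      simp only [hW, Finset.mem_union, Finset.mem_sdiff, Finset.mem_univ, true_and,
        Finset.mem_union]
      constructor
      · rintro (hx | hx)
        · exact fun hxB => hx (Or.inr hxB)
        · exact fun hxB => (Finset.disjoint_left.mp h) hx hxB
      · intro hx
        by_cases hxA : x ∈ A
        · exact Or.inr hxA
        · exact Or.inl fun h' => h'.elim hxA hx
    unfold EntropyVec.I at h0
    rw [hSW, hWA, S_compl] at h0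
    linarith

lemma S_nonneg (hv : v.InSAC) (A : PSet N) : 0 ≤ v.S A := by
  have := AL hv (Finset.disjoint_empty_right A)
  simp [v.S_empty] at this
  linarith

lemma memP_of_I_eq (hP : P = v.PMI) {A B : PSet N} (hA : A.Nonempty) (hB : B.Nonempty)
    (hd : Disjoint A B) (h : v.I A B = 0) : s(A, B) ∈ P := by
  rw [hP]; exact ⟨A, B, rfl, hA, hB, hd, h⟩

lemma I_eq_zero_of_memP (hP : P = v.PMI) {A B : PSet N} (h : s(A, B) ∈ P) :
    v.I A B = 0 := by
  rw [hP] at h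
  obtain ⟨C, D, hCD, _, _, _, hI⟩ := h
  rcases Sym2.eq_iff.mp hCD with ⟨rfl, rfl⟩ | ⟨rfl, rfl⟩
  · exact hI
  · rw [I_comm]; exact hI

lemma I_pos_of_notMemP (hv : v.InSAC) (hP : P = v.PMI) {A B : PSet N}
    (hA : A.Nonempty) (hB : B.Nonempty) (hd : Disjoint A B) (h : s(A, B) ∉ P) :
    0 < v.I A B := by
  rcases lt_or_eq_of_le (hv A B hA hB hd) with h' | h'
  · exact h'
  · exact absurd (memP_of_I_eq hP hA hB hd h'.symm) h

lemma bpos_I_pos (hv : v.InSAC) (hP : P = v.PMI) {e : PSet N} (hbp : BPos P e)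
    {A B : PSet N} (hA : A.Nonempty) (hB : B.Nonempty) (hd : Disjoint A B)
    (hU : A ∪ B = e) : 0 < v.I A B :=
  I_pos_of_notMemP hv hP hA hB hd (hbp _ ⟨A, B, rfl, hA, hB, hd, hU⟩)

lemma crossing_edge (hv : v.InSAC) (hP : P = v.PMI) :
    ∀ (n : ℕ) (Y Z : PSet N), Y.card + Z.card ≤ n → Y.Nonempty → Z.Nonempty → Disjoint Y Z →
      0 < v.I Y Z →
      ∃ Y' Z' : PSet N, Y' ⊆ Y ∧ Z' ⊆ Z ∧ Y'.Nonempty ∧ Z'.Nonempty ∧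
        (Y' ∪ Z') ∈ Hedge P := by
  intro n
  induction n with
  | zero =>
    intro Y Z hc hY _ _ _
    exact absurd hc (by have := Finset.card_pos.mpr hY; omega)
  | succ n ih =>
    intro Y Z hc hY hZ hd hI
    by_cases hex : ∃ Y'' Z'' : PSet N, Y'' ⊆ Y ∧ Z'' ⊆ Z ∧ Y''.Nonempty ∧ Z''.Nonempty ∧
        Y''.card + Z''.card < Y.card + Z.card ∧ 0 < v.I Y'' Z''
    · obtain ⟨Y'', Z'', hY1, hZ1, hY2, hZ2, hlt, hI2⟩ := hex
      obtain ⟨Y', Z', h1, h2, h3, h4, h5⟩ :=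
        ih Y'' Z'' (by omega) hY2 hZ2 (hd.mono hY1 hZ1) hI2
      exact ⟨Y', Z', h1.trans hY1, h2.trans hZ1, h3, h4, h5⟩
    · push_neg at hex
      refine ⟨Y, Z, le_refl _, le_refl _, hY, hZ, ?_, ?_⟩
      · have h1 := Finset.card_pos.mpr hY
        have h2 := Finset.card_pos.mpr hZ
        rw [Finset.card_union_of_disjoint hd]; omega
      intro m hm hmP
      obtain ⟨A, B, rfl, hA, hB, hdAB, hU⟩ := hm
      have hIAB : v.I A B = 0 := I_eq_zero_of_memP hP hmP
      have hmin : ∀ Y'' Z'' : PSet N, Y'' ⊆ Y → Z'' ⊆ Z → Y''.Nonempty → Z''.Nonempty →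
          Y''.card + Z''.card < Y.card + Z.card → v.I Y'' Z'' = 0 := by
        intro Y'' Z'' h1 h2 h3 h4 h5
        have hge := hv Y'' Z'' h3 h4 (hd.mono h1 h2)
        have := hex Y'' Z'' h1 h2 h3 h4 h5
        linarith
      have key : ∀ C D : PSet N, C ∪ D = Y ∪ Z → Disjoint C D → D.Nonempty →
          v.S C = v.S (C ∩ Y) + v.S (C ∩ Z) := by
        intro C D hCD hdis hDne
        have hC1 : (C ∩ Y) ∪ (C ∩ Z) = C := by
          rw [← Finset.inter_union_distrib_left]
          exact Finset.inter_eq_left.mpr (hCD ▸ Finset.subset_union_left)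
        rcases (C ∩ Y).eq_empty_or_nonempty with h1 | h1
        · have hCZ : C ∩ Z = C := by
            rw [Finset.inter_eq_left]
            intro x hx
            have hx' : x ∈ C ∩ Y ∪ C ∩ Z := hC1.symm ▸ hx
            rcases Finset.mem_union.mp hx' with h' | h'
            · exact absurd (h1 ▸ h') (Finset.notMem_empty x)
            · exact (Finset.mem_inter.mp h').2
          rw [h1, hCZ, v.S_empty]; ring
        rcases (C ∩ Z).eq_empty_or_nonempty with h2 | h2
        · have hCY : C ∩ Y = C := by
            rw [Finset.inter_eq_left]
            intro x hx
            have hx' : x ∈ C ∩ Y ∪ C ∩ Z := hC1.symm ▸ hx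
            rcases Finset.mem_union.mp hx' with h' | h'
            · exact (Finset.mem_inter.mp h').2
            · exact absurd (h2 ▸ h') (Finset.notMem_empty x)
          rw [h2, hCY, v.S_empty]; ring
        have hlt : (C ∩ Y).card + (C ∩ Z).card < Y.card + Z.card := by
          obtain ⟨x, hx⟩ := hDne
          have hxC : x ∉ C := Finset.disjoint_right.mp hdis hx
          have hxYZ : x ∈ Y ∪ Z := by rw [← hCD]; exact Finset.mem_union_right _ hx
          rcases Finset.mem_union.mp hxYZ with hxY | hxZ
          · have hss : (C ∩ Y) ⊂ Y :=
              ⟨Finset.inter_subset_right, fun hs => hxC (Finset.mem_inter.mp (hs hxY)).1⟩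
            have := Finset.card_lt_card hss
            have := Finset.card_le_card (Finset.inter_subset_right : C ∩ Z ⊆ Z)
            omega
          · have hss : (C ∩ Z) ⊂ Z :=
              ⟨Finset.inter_subset_right, fun hs => hxC (Finset.mem_inter.mp (hs hxZ)).1⟩
            have := Finset.card_lt_card hss
            have := Finset.card_le_card (Finset.inter_subset_right : C ∩ Y ⊆ Y)
            omega
        have hz := hmin (C ∩ Y) (C ∩ Z) Finset.inter_subset_right Finset.inter_subset_right
          h1 h2 hlt
        unfold EntropyVec.I at hz
        rw [hC1] at hz; linarith
      have hSA : v.S A = v.S (A ∩ Y) + v.S (A ∩ Z) := key A B hU hdAB hB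
      have hSB : v.S B = v.S (B ∩ Y) + v.S (B ∩ Z) :=
        key B A (by rw [Finset.union_comm]; exact hU) hdAB.symm hA
      have hYd : Y = (A ∩ Y) ∪ (B ∩ Y) := by
        rw [← Finset.union_inter_distrib_right, hU]
        exact (Finset.inter_eq_right.mpr Finset.subset_union_left).symm
      have hZd : Z = (A ∩ Z) ∪ (B ∩ Z) := by
        rw [← Finset.union_inter_distrib_right, hU]
        exact (Finset.inter_eq_right.mpr Finset.subset_union_right).symm
      have i1 : v.S Y ≤ v.S (A ∩ Y) + v.S (B ∩ Y) := by
        nth_rewrite 1 [hYd]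
        exact SA' hv (hdAB.mono Finset.inter_subset_left Finset.inter_subset_left)
      have i2 : v.S Z ≤ v.S (A ∩ Z) + v.S (B ∩ Z) := by
        nth_rewrite 1 [hZd]
        exact SA' hv (hdAB.mono Finset.inter_subset_left Finset.inter_subset_left)
      have hU2 : v.S (Y ∪ Z) = v.S A + v.S B := by
        rw [← hU]
        unfold EntropyVec.I at hIAB; linarith
      unfold EntropyVec.I at hI
      linarith

lemma hedge_union (hds : IsMIDownSet P) {e f : PSet N} (he : e ∈ Hedge P)
    (hf : f ∈ Hedge P) (hx : (e ∩ f).Nonempty) : e ∪ f ∈ Hedge P := by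
  obtain ⟨x, hx⟩ := hx
  have hxe : x ∈ e := (Finset.mem_inter.mp hx).1
  have hxf : x ∈ f := (Finset.mem_inter.mp hx).2
  refine ⟨le_trans he.1 (Finset.card_le_card Finset.subset_union_left), ?_⟩
  intro m hm hmP
  obtain ⟨Y, Z, rfl, hY, hZ, hd, hU⟩ := hm
  have main : ∀ g : PSet N, BPos P g → g ⊆ Y ∪ Z → (Y ∩ g).Nonempty → (Z ∩ g).Nonempty →
      False := by
    intro g hbp hgsub h1 h2
    have hd' : Disjoint (Y ∩ g) (Z ∩ g) :=
      hd.mono Finset.inter_subset_left Finset.inter_subset_left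
    have hUg : (Y ∩ g) ∪ (Z ∩ g) = g := by
      rw [← Finset.union_inter_distrib_right]
      exact Finset.inter_eq_right.mpr hgsub
    have hnot : s(Y ∩ g, Z ∩ g) ∉ P := hbp _ ⟨_, _, rfl, h1, h2, hd', hUg⟩
    exact hnot (hds _ _ ⟨_, _, rfl, h1, h2, hd'⟩ hmP
      ⟨Y ∩ g, Z ∩ g, Y, Z, rfl, rfl, Finset.inter_subset_left, Finset.inter_subset_left⟩)
  have hYZ : Y ∪ Z = e ∪ f := hU
  rcases (Y ∩ e).eq_empty_or_nonempty with h1 | h1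
  · -- Y ⊆ f and x ∈ Z ∩ f
    have hYf : (Y ∩ f).Nonempty := by
      obtain ⟨y, hy⟩ := hY
      have : y ∈ e ∪ f := hYZ ▸ Finset.mem_union_left _ hy
      rcases Finset.mem_union.mp this with h' | h'
      · exact absurd (Finset.mem_inter.mpr ⟨hy, h'⟩) (by rw [h1]; exact Finset.notMem_empty y)
      · exact ⟨y, Finset.mem_inter.mpr ⟨hy, h'⟩⟩
    have hZf : (Z ∩ f).Nonempty := by
      have hxYZ : x ∈ Y ∪ Z := hYZ ▸ Finset.mem_union_left _ hxe
      rcases Finset.mem_union.mp hxYZ with h' | h'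
      · exact absurd (Finset.mem_inter.mpr ⟨h', hxe⟩) (by rw [h1]; exact Finset.notMem_empty x)
      · exact ⟨x, Finset.mem_inter.mpr ⟨h', hxf⟩⟩
    exact main f hf.2 (hYZ ▸ Finset.subset_union_right) hYf hZf
  rcases (Z ∩ e).eq_empty_or_nonempty with h2 | h2
  · have hYf : (Y ∩ f).Nonempty := by
      have hxYZ : x ∈ Y ∪ Z := hYZ ▸ Finset.mem_union_left _ hxe
      rcases Finset.mem_union.mp hxYZ with h' | h'
      · exact ⟨x, Finset.mem_inter.mpr ⟨h', hxf⟩⟩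
      · exact absurd (Finset.mem_inter.mpr ⟨h', hxe⟩) (by rw [h2]; exact Finset.notMem_empty x)
    have hZf : (Z ∩ f).Nonempty := by
      obtain ⟨z, hz⟩ := hZ
      have : z ∈ e ∪ f := hYZ ▸ Finset.mem_union_right _ hz
      rcases Finset.mem_union.mp this with h' | h'
      · exact absurd (Finset.mem_inter.mpr ⟨hz, h'⟩) (by rw [h2]; exact Finset.notMem_empty z)
      · exact ⟨z, Finset.mem_inter.mpr ⟨hz, h'⟩⟩
    exact main f hf.2 (hYZ ▸ Finset.subset_union_right) hYf hZf
  · exact main e he.2 (hYZ ▸ Finset.subset_union_left) h1 h2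

lemma clique_insert {Q : Set (PSet N)} (hQ : IsMaxClique P Q) {X : PSet N}
    (hX : X ∈ Hedge P) (h : ∀ f ∈ Q, (X ∩ f).Nonempty) : X ∈ Q := by
  obtain ⟨hne, ⟨hsub, hpair⟩, hmax⟩ := hQ
  have hcl : IsLineClique P (insert X Q) := by
    constructor
    · exact Set.insert_subset hX hsub
    · intro e1 he1 f1 hf1 hef
      rcases Set.mem_insert_iff.mp he1 with he1' | he1'
      · rcases Set.mem_insert_iff.mp hf1 with hf1' | hf1'
        · exact absurd (he1'.trans hf1'.symm) hef
        · rw [he1']; exact h f1 hf1'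
      · rcases Set.mem_insert_iff.mp hf1 with hf1' | hf1'
        · rw [hf1', Finset.inter_comm]; exact h e1 he1'
        · exact hpair e1 he1' f1 hf1' hef
  have heq := hmax _ hcl (Set.subset_insert _ _)
  rw [heq]; exact Set.mem_insert _ _

lemma qInter_subset_of_mem {Q : Set (PSet N)} (hQ : IsMaxClique P Q) {X : PSet N}
    (hX : X ∈ Hedge P) {k : Party N} (hk : k ∈ qInter Q) (hkX : k ∈ X) :
    ∀ ℓ ∈ qInter Q, ℓ ∈ X := by
  have hXQ : X ∈ Q :=
    clique_insert hQ hX fun f hf => ⟨k, Finset.mem_inter.mpr ⟨hkX, hk f hf⟩⟩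
  intro ℓ hℓ; exact hℓ X hXQ

lemma S_single_pos (hv : v.InSAC) (hP : P = v.PMI) {e : PSet N} (he : e ∈ Hedge P)
    {a : Party N} (ha : a ∈ e) : 0 < v.S {a} := by
  obtain ⟨b, hb, hba⟩ := Finset.exists_mem_ne (lt_of_lt_of_le one_lt_two he.1) a
  have hZ : (e \ {a}).Nonempty := ⟨b, Finset.mem_sdiff.mpr ⟨hb, by simp [hba]⟩⟩
  have hd : Disjoint ({a} : PSet N) (e \ {a}) := Finset.disjoint_sdiff
  have hU : ({a} : PSet N) ∪ (e \ {a}) = e :=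
    Finset.union_sdiff_of_subset (Finset.singleton_subset_iff.mpr ha)
  have hI := bpos_I_pos hv hP he.2 (Finset.singleton_nonempty a) hZ hd hU
  have hal := AL hv hd
  unfold EntropyVec.I at hI
  linarith

lemma I_zero_J (hv : v.InSAC) (hP : P = v.PMI) {Q : Set (PSet N)} (hQ : IsMaxClique P Q)
    {ℓ : Party N} (hℓ : ℓ ∈ qInter Q) {Z : PSet N} (hZ : Z.Nonempty)
    (hd : Disjoint ({ℓ} : PSet N) Z) {k : Party N}
    (hk : k ∈ qInter Q) (hkℓ : k ≠ ℓ) (hkZ : k ∉ Z) : v.I {ℓ} Z = 0 := by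
  by_contra h
  have hpos : 0 < v.I {ℓ} Z :=
    lt_of_le_of_ne (hv _ _ (Finset.singleton_nonempty _) hZ hd) (Ne.symm h)
  obtain ⟨Y', Z', hY1, hZ1, hY2, hZ2, hHe⟩ :=
    crossing_edge hv hP _ {ℓ} Z le_rfl (Finset.singleton_nonempty _) hZ hd hpos
  have hY'eq : Y' = {ℓ} := by
    rcases Finset.subset_singleton_iff.mp hY1 with h' | h'
    · exact absurd h' (Finset.nonempty_iff_ne_empty.mp hY2)
    · exact h'
  have hℓX : ℓ ∈ Y' ∪ Z' := by rw [hY'eq]; simp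
  have hkX := qInter_subset_of_mem hQ hHe hℓ hℓX k hk
  rcases Finset.mem_union.mp hkX with h' | h'
  · rw [hY'eq] at h'; exact hkℓ (Finset.mem_singleton.mp h')
  · exact hkZ (hZ1 h')

lemma pair_part {a b : Party N} (hab : a ≠ b) {A B : PSet N} (hA : A.Nonempty)
    (hB : B.Nonempty) (hd : Disjoint A B) (hU : A ∪ B = ({a, b} : PSet N)) :
    (A = {a} ∧ B = {b}) ∨ (A = {b} ∧ B = {a}) := by
  have main : ∀ C D : PSet N, D.Nonempty → Disjoint C D → C ∪ D = ({a, b} : PSet N) →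
      a ∈ C → C = {a} ∧ D = {b} := by
    intro C D hD hd hU haC
    have hbD : b ∈ D := by
      by_contra hbD
      obtain ⟨y, hy⟩ := hD
      have hy2 : y ∈ ({a, b} : PSet N) := hU ▸ Finset.mem_union_right _ hy
      rcases Finset.mem_insert.mp hy2 with rfl | hy3
      · exact Finset.disjoint_left.mp hd haC hy
      · exact hbD (Finset.mem_singleton.mp hy3 ▸ hy)
    have hCa : C = {a} := by
      rw [Finset.eq_singleton_iff_unique_mem]
      refine ⟨haC, fun x hx => ?_⟩
      have hx2 : x ∈ ({a, b} : PSet N) := hU ▸ Finset.mem_union_left _ hx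
      rcases Finset.mem_insert.mp hx2 with rfl | hx3
      · rfl
      · have hxb : x = b := Finset.mem_singleton.mp hx3
        exact absurd hbD fun h' => Finset.disjoint_left.mp hd (hxb ▸ hx) h'
    have hDb : D = {b} := by
      rw [Finset.eq_singleton_iff_unique_mem]
      refine ⟨hbD, fun x hx => ?_⟩
      have hx2 : x ∈ ({a, b} : PSet N) := hU ▸ Finset.mem_union_right _ hx
      rcases Finset.mem_insert.mp hx2 with rfl | hx3
      · exact absurd hx (Finset.disjoint_left.mp hd haC)
      · exact Finset.mem_singleton.mp hx3
    exact ⟨hCa, hDb⟩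
  have ha : a ∈ A ∪ B := by rw [hU]; simp
  rcases Finset.mem_union.mp ha with h | h
  · exact Or.inl (main A B hB hd hU h)
  · have := main B A hA hd.symm (by rw [Finset.union_comm]; exact hU) h
    exact Or.inr ⟨this.2, this.1⟩

lemma two_core (hN : 2 ≤ N) (hv : v.InSAC) (hP : P = v.PMI)
    {Q : Set (PSet N)} (hQ : IsMaxClique P Q) {a b : Party N}
    (ha : a ∈ qInter Q) (hb : b ∈ qInter Q) (hab : a ≠ b) :
    qInter Q = {a, b} ∧ ({a, b} : PSet N) ∈ Hedge P ∧
      ∀ e ∈ Hedge P, (a ∈ e ∨ b ∈ e) → e = ({a, b} : PSet N) := by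
  have hcardU : (Finset.univ : PSet N).card = N + 1 := by
    rw [Finset.card_univ, Fintype.card_fin]
  set W : PSet N := Finset.univ \ {a, b} with hWdef
  have hWne : W.Nonempty := by
    rw [← Finset.card_pos, hWdef, Finset.card_sdiff_of_subset (Finset.subset_univ _),
      Finset.card_pair hab, hcardU]
    omega
  have hbW : b ∉ W := by simp [hWdef]
  have haW : a ∉ W := by simp [hWdef]
  have hda : Disjoint ({a} : PSet N) W := by
    simp [Finset.disjoint_left, haW]
  have hdb : Disjoint ({b} : PSet N) W := by
    simp [Finset.disjoint_left, hbW]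
  have hIa : v.I {a} W = 0 := I_zero_J hv hP hQ ha hWne hda hb (Ne.symm hab) hbW
  have hIb : v.I {b} W = 0 := I_zero_J hv hP hQ hb hWne hdb ha hab haW
  have hUa : ({a} : PSet N) ∪ W = Finset.univ \ {b} := by
    ext x
    simp only [hWdef, Finset.mem_union, Finset.mem_singleton, Finset.mem_sdiff,
      Finset.mem_univ, true_and, Finset.mem_insert]
    constructor
    · rintro (rfl | hx)
      · exact hab
      · exact fun h' => hx (Or.inr h')
    · intro hx
      by_cases hxa : x = a
      · exact Or.inl hxa
      · exact Or.inr fun h' => h'.elim hxa hx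
  have hUb : ({b} : PSet N) ∪ W = Finset.univ \ {a} := by
    ext x
    simp only [hWdef, Finset.mem_union, Finset.mem_singleton, Finset.mem_sdiff,
      Finset.mem_univ, true_and, Finset.mem_insert]
    constructor
    · rintro (rfl | hx)
      · exact Ne.symm hab
      · exact fun h' => hx (Or.inl h')
    · intro hx
      by_cases hxb : x = b
      · exact Or.inl hxb
      · exact Or.inr fun h' => h'.elim hx hxb
  have hSW : v.S W = v.S {a, b} := by rw [hWdef, S_compl]
  have e1 : v.S {a} + v.S {a, b} - v.S {b} = 0 := by
    unfold EntropyVec.I at hIa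
    rw [hUa, hSW, S_compl] at hIa
    linarith
  have e2 : v.S {b} + v.S {a, b} - v.S {a} = 0 := by
    unfold EntropyVec.I at hIb
    rw [hUb, hSW, S_compl] at hIb
    linarith
  have hSab : v.S {a, b} = 0 := by linarith
  obtain ⟨e₀, he₀Q⟩ := hQ.1
  have he₀ : e₀ ∈ Hedge P := hQ.2.1.1 he₀Q
  have hSapos : 0 < v.S {a} := S_single_pos hv hP he₀ (ha e₀ he₀Q)
  have hIab : 0 < v.I {a} {b} := by
    unfold EntropyVec.I
    have hun : ({a} : PSet N) ∪ {b} = {a, b} := rfl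
    rw [hun, hSab]
    linarith
  have hpairE : ({a, b} : PSet N) ∈ Hedge P := by
    refine ⟨by rw [Finset.card_pair hab], ?_⟩
    intro m hm hmP
    obtain ⟨A, B, rfl, hA, hB, hd, hU⟩ := hm
    have hI0 := I_eq_zero_of_memP hP hmP
    rcases pair_part hab hA hB hd hU with ⟨h1, h2⟩ | ⟨h1, h2⟩
    · rw [h1, h2] at hI0; linarith
    · rw [h1, h2] at hI0; rw [I_comm] at hI0; linarith
  have hK : ∀ e ∈ Hedge P, (a ∈ e ∨ b ∈ e) → e = ({a, b} : PSet N) := by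
    intro e he hmem
    have hsub : ({a, b} : PSet N) ⊆ e := by
      have hall : ∀ ℓ ∈ qInter Q, ℓ ∈ e := by
        rcases hmem with h | h
        · exact qInter_subset_of_mem hQ he ha h
        · exact qInter_subset_of_mem hQ he hb h
      intro x hx
      rcases Finset.mem_insert.mp hx with h' | h'
      · rw [h']; exact hall a ha
      · rw [Finset.mem_singleton.mp h']; exact hall b hb
    by_cases hsub2 : e ⊆ ({a, b} : PSet N)
    · exact Finset.Subset.antisymm hsub2 hsub
    exfalso
    have hW2 : (e \ ({a, b} : PSet N)).Nonempty := Finset.sdiff_nonempty.mpr hsub2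
    have hd2 : Disjoint ({a, b} : PSet N) (e \ ({a, b} : PSet N)) := Finset.disjoint_sdiff
    have hU2 : ({a, b} : PSet N) ∪ (e \ ({a, b} : PSet N)) = e :=
      Finset.union_sdiff_of_subset hsub
    have hIp := bpos_I_pos hv hP he.2 ⟨a, Finset.mem_insert_self a {b}⟩ hW2 hd2 hU2
    have hal := AL hv hd2
    unfold EntropyVec.I at hIp
    linarith
  have hq : qInter Q = ({a, b} : Set (Party N)) := by
    apply Set.eq_of_subset_of_subset
    · intro ℓ hℓ
      have hmem := qInter_subset_of_mem hQ hpairE ha (Finset.mem_insert_self a {b}) ℓ hℓ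
      rcases Finset.mem_insert.mp hmem with rfl | h'
      · exact Set.mem_insert _ _
      · rw [Finset.mem_singleton.mp h']
        exact Set.mem_insert_of_mem _ rfl
    · intro ℓ hℓ
      rcases Set.mem_insert_iff.mp hℓ with rfl | h'
      · exact ha
      · rw [Set.mem_singleton_iff.mp h']; exact hb
  exact ⟨hq, hpairE, hK⟩

lemma partII (hN : 2 ≤ N) (hds : IsMIDownSet P) {Q : Set (PSet N)}
    (hQ : IsMaxClique P Q) {ℓ : Party N} (hℓ : ℓ ∈ qInter Q) :
    ¬ hConn (Finset.univ \ {ℓ}) (subEdges P (Finset.univ \ {ℓ})) := by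
  intro hconn
  classical
  set V' : PSet N := Finset.univ \ {ℓ} with hV'
  have hcardU : (Finset.univ : PSet N).card = N + 1 := by
    rw [Finset.card_univ, Fintype.card_fin]
  have hV'card : V'.card = N := by
    rw [hV', Finset.card_sdiff_of_subset (by simp), hcardU, Finset.card_singleton]
    omega
  obtain ⟨A, hA, B, hB, hAB⟩ := Finset.one_lt_card.mp (by omega : 1 < V'.card)
  have reach : ∀ x, Relation.ReflTransGen (hStep (subEdges P V')) A x →
      x = A ∨ ∃ e, e ∈ Hedge P ∧ e ⊆ V' ∧ A ∈ e ∧ x ∈ e := by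
    intro x hx
    induction hx with
    | refl => exact Or.inl rfl
    | tail h1 h2 ih =>
      obtain ⟨f, hf, hxf, hyf⟩ := h2
      have hfV : f ⊆ V' := hf.1.subset
      rcases ih with rfl | ⟨e, heH, heV, hAe, hxe⟩
      · exact Or.inr ⟨f, hf.2, hfV, hxf, hyf⟩
      · exact Or.inr ⟨e ∪ f,
          hedge_union hds heH hf.2 ⟨_, Finset.mem_inter.mpr ⟨hxe, hxf⟩⟩,
          Finset.union_subset heV hfV, Finset.mem_union_left _ hAe,
          Finset.mem_union_right _ hyf⟩
  set T : Finset (PSet N) :=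
    Finset.univ.filter (fun e => e ∈ Hedge P ∧ e ⊆ V' ∧ A ∈ e) with hT
  have hTmem : ∀ e : PSet N, e ∈ T ↔ e ∈ Hedge P ∧ e ⊆ V' ∧ A ∈ e := by
    intro e; simp [hT]
  have hTne : T.Nonempty := by
    rcases reach B (hconn A hA B hB) with hBA | ⟨e, h1, h2, h3, h4⟩
    · exact absurd hBA (Ne.symm hAB)
    · exact ⟨e, (hTmem e).mpr ⟨h1, h2, h3⟩⟩
  obtain ⟨eM, heMT, heMmax⟩ := T.exists_max_image Finset.card hTne
  obtain ⟨heH, heV, hAe⟩ := (hTmem eM).mp heMT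
  have hV'sub : V' ⊆ eM := by
    intro c hc
    by_contra hce
    rcases reach c (hconn A hA c hc) with hcA | ⟨f, hf1, hf2, hf3, hf4⟩
    · rw [hcA] at hce; exact hce hAe
    · have hun : eM ∪ f ∈ Hedge P :=
        hedge_union hds heH hf1 ⟨A, Finset.mem_inter.mpr ⟨hAe, hf3⟩⟩
      have hin : eM ∪ f ∈ T := (hTmem _).mpr
        ⟨hun, Finset.union_subset heV hf2, Finset.mem_union_left _ hAe⟩
      have hlt : eM.card < (eM ∪ f).card :=
        Finset.card_lt_card ⟨Finset.subset_union_left,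
          fun hs => hce (hs (Finset.mem_union_right _ hf4))⟩
      have := heMmax _ hin
      omega
  have hV'H : V' ∈ Hedge P := by
    have heq : eM = V' := Finset.Subset.antisymm heV hV'sub
    exact heq ▸ heH
  have hV'Q : V' ∈ Q := by
    apply clique_insert hQ hV'H
    intro f hfQ
    have hf := hQ.2.1.1 hfQ
    obtain ⟨x, hx, y, hy, hxy⟩ := Finset.one_lt_card.mp (lt_of_lt_of_le one_lt_two hf.1)
    by_cases hxl : x = ℓ
    · refine ⟨y, Finset.mem_inter.mpr ⟨?_, hy⟩⟩
      rw [hV', Finset.mem_sdiff]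
      exact ⟨Finset.mem_univ y, by simp [show y ≠ ℓ from fun h => hxy (hxl ▸ h ▸ rfl)]⟩
    · refine ⟨x, Finset.mem_inter.mpr ⟨?_, hx⟩⟩
      rw [hV', Finset.mem_sdiff]
      exact ⟨Finset.mem_univ x, by simp [hxl]⟩
  have hℓV : ℓ ∈ V' := hℓ V' hV'Q
  rw [hV', Finset.mem_sdiff] at hℓV
  exact hℓV.2 (Finset.mem_singleton_self ℓ)


/-- For every KC-PMI `P` and max-clique `Q` of the line graph
`L_{H_P}`: (i) `|Q^∩| ∈ {0,1,2}`; (ii) if `|Q^∩| > 0` then for every `v_ℓ ∈ Q^∩` the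
sub-hypergraph `H_{⟦N⟧∖{ℓ}}` is disconnected; (iii) `|Q^∩| = 2` iff `H_P` is
disconnected and, writing `Q^∩ = {v_{ℓ₁}, v_{ℓ₂}}`, one of its connected components has
vertex set exactly `{v_{ℓ₁}, v_{ℓ₂}}` and contains the hyperedge `e_{{ℓ₁,ℓ₂}}`. -/
theorem statement15 {N : ℕ} (hN : 2 ≤ N) (P : Set (MI N)) (hP : IsKCPMI P)
    (Q : Set (PSet N)) (hQ : IsMaxClique P Q) :
    ((qInter Q).ncard = 0 ∨ (qInter Q).ncard = 1 ∨ (qInter Q).ncard = 2) ∧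
    (∀ ℓ : Party N, ℓ ∈ qInter Q →
      ¬ hConn (Finset.univ \ {ℓ}) (subEdges P (Finset.univ \ {ℓ}))) ∧
    ((qInter Q).ncard = 2 ↔
      (¬ hConn (Finset.univ : PSet N) (Hedge P) ∧
       ∃ ℓ₁ ℓ₂ : Party N, ℓ₁ ≠ ℓ₂ ∧
         qInter Q = {ℓ₁, ℓ₂} ∧
         hComp (Finset.univ : PSet N) (Hedge P) ℓ₁ = {ℓ₁, ℓ₂} ∧
         ({ℓ₁, ℓ₂} : PSet N) ∈ Hedge P)) := by
  obtain ⟨⟨v, hv, hPv⟩, hds⟩ := hP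
  have hfin : (qInter Q).Finite := Set.toFinite _
  have hle : (qInter Q).ncard ≤ 2 := by
    by_contra hgt
    push_neg at hgt
    set F := hfin.toFinset with hF
    have hFc : 2 < F.card := by
      rw [hF, ← Set.ncard_eq_toFinset_card (qInter Q) hfin]; exact hgt
    obtain ⟨a, ha⟩ := Finset.card_pos.mp (by omega : 0 < F.card)
    obtain ⟨b, hb, hba⟩ := Finset.exists_mem_ne (show 1 < F.card by omega) a
    have hc3 : 0 < ((F.erase a).erase b).card := by
      have h1 : (F.erase a).card = F.card - 1 := Finset.card_erase_of_mem ha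
      have h2 : ((F.erase a).erase b).card = (F.erase a).card - 1 :=
        Finset.card_erase_of_mem (Finset.mem_erase.mpr ⟨hba, hb⟩)
      omega
    obtain ⟨c, hc⟩ := Finset.card_pos.mp hc3
    have hcb : c ≠ b := (Finset.mem_erase.mp hc).1
    have hca : c ≠ a := (Finset.mem_erase.mp (Finset.mem_erase.mp hc).2).1
    have hcF : c ∈ F := (Finset.mem_erase.mp (Finset.mem_erase.mp hc).2).2
    have hmem : ∀ x ∈ F, x ∈ qInter Q := fun x hx => (Set.Finite.mem_toFinset hfin).mp hx
    obtain ⟨hq, -, -⟩ := two_core hN hv hPv hQ (hmem a ha) (hmem b hb) (Ne.symm hba)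
    have hcq := hmem c hcF
    rw [hq] at hcq
    rcases Set.mem_insert_iff.mp hcq with h' | h'
    · exact hca h'
    · exact hcb (Set.mem_singleton_iff.mp h')
  refine ⟨by omega, fun ℓ hℓ => partII hN hds hQ hℓ, ?_, ?_⟩
  · intro h2
    obtain ⟨ℓ₁, ℓ₂, hne, hqpair⟩ := Set.ncard_eq_two.mp h2
    have hℓ₁ : ℓ₁ ∈ qInter Q := by rw [hqpair]; exact Set.mem_insert _ _
    have hℓ₂ : ℓ₂ ∈ qInter Q := by rw [hqpair]; exact Set.mem_insert_of_mem _ rfl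
    obtain ⟨hq, hpairE, hK⟩ := two_core hN hv hPv hQ hℓ₁ hℓ₂ hne
    have compsub : ∀ x, Relation.ReflTransGen (hStep (Hedge P)) ℓ₁ x →
        x = ℓ₁ ∨ x = ℓ₂ := by
      intro x hx
      induction hx with
      | refl => exact Or.inl rfl
      | tail h1 h2 ih =>
        obtain ⟨f, hfH, hxf, hyf⟩ := h2
        have hfeq : f = ({ℓ₁, ℓ₂} : PSet N) := by
          apply hK f hfH
          rcases ih with rfl | rfl
          · exact Or.inl hxf
          · exact Or.inr hxf
        rw [hfeq] at hyf
        rcases Finset.mem_insert.mp hyf with h' | h'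
        · exact Or.inl h'
        · exact Or.inr (Finset.mem_singleton.mp h')
    have comp : hComp Finset.univ (Hedge P) ℓ₁ = {ℓ₁, ℓ₂} := by
      apply Set.eq_of_subset_of_subset
      · rintro x ⟨-, hx⟩
        rcases compsub x hx with rfl | rfl
        · exact Set.mem_insert _ _
        · exact Set.mem_insert_of_mem _ rfl
      · intro x hx
        rcases Set.mem_insert_iff.mp hx with rfl | h'
        · exact ⟨Finset.mem_univ _, Relation.ReflTransGen.refl⟩
        · rw [Set.mem_singleton_iff.mp h']
          exact ⟨Finset.mem_univ _, Relation.ReflTransGen.single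
            ⟨{ℓ₁, ℓ₂}, hpairE, Finset.mem_insert_self _ _, by simp⟩⟩
    have hcompl : ((({ℓ₁, ℓ₂} : PSet N))ᶜ).Nonempty := by
      rw [← Finset.card_pos, Finset.card_compl, Finset.card_pair hne]
      have hcard : Fintype.card (Party N) = N + 1 := Fintype.card_fin _
      omega
    obtain ⟨c, hc⟩ := hcompl
    have hc' : c ∉ ({ℓ₁, ℓ₂} : PSet N) := Finset.mem_compl.mp hc
    refine ⟨?_, ℓ₁, ℓ₂, hne, hqpair, comp, hpairE⟩
    intro hconn
    rcases compsub c (hconn ℓ₁ (Finset.mem_univ _) c (Finset.mem_univ _)) with rfl | rfl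
    · exact hc' (Finset.mem_insert_self _ _)
    · exact hc' (by simp)
  · rintro ⟨-, ℓ₁, ℓ₂, hne, hqpair, -, -⟩
    rw [hqpair]
    exact Set.ncard_pair hne

end HEC
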